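/- Let H be a Hilbert space with inner product a, Π : H → S a bounded projection onto a closed subspace, V = ker Π, C the a-orthogonal projection onto V, and W = (I − C)(H). If u ∈ H satisfies a(u,v) = F(v) for all v ∈ H (F a continuous linear functional), and u_W ∈ W satisfies a(u_W, v) = F(v) for all v ∈ W, then u_W = (I − C) Π u and u − u_W = C u. -/
import Mathlib


open scoped RealInnerProductSpace

/-- Exact representation of the LOD Galerkin solution: `u_W = (I − C) Π u` and
`u − u_W = C u`. -/
theorem stmt4
    {H : Type*} [NormedAddCommGroup H] [InnerProductSpace ℝ H] [CompleteSpace H]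
    (V : Submodule ℝ H) (Pi0 : H →L[ℝ] H)
    (hproj : ∀ v, Pi0 (Pi0 v) = Pi0 v)
    (hker : ∀ v : H, v ∈ V ↔ Pi0 v = 0)
    (C : H →L[ℝ] H)
    (hCmem : ∀ v, C v ∈ V)
    (hCorth : ∀ v, ∀ w ∈ V, ⟪v - C v, w⟫ = 0)
    (F : H →L[ℝ] ℝ) (u uW : H)
    (hu : ∀ v : H, ⟪u, v⟫ = F v)
    (huW : ∃ v : H, uW = v - C v)
    (hgal : ∀ v : H, ⟪uW, v - C v⟫ = F (v - C v)) :
    uW = Pi0 u - C (Pi0 u) ∧ u - uW = C u := by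
  obtain ⟨w, hw⟩ := huW
  -- C is identity on V
  have hCid : ∀ v ∈ V, C v = v := by
    intro v hv
    have hmem : v - C v ∈ V := V.sub_mem hv (hCmem v)
    have := hCorth v (v - C v) hmem
    have hz : v - C v = 0 := by
      have := inner_self_eq_zero (𝕜 := ℝ) (x := v - C v) |>.mp this
      exact this
    have := sub_eq_zero.mp hz
    exact this.symm
  -- u - uW is orthogonal to W
  have horth : ∀ v : H, ⟪u - uW, v - C v⟫ = 0 := by
    intro v
    rw [inner_sub_left, hu, hgal, sub_self]
  -- u - z ∈ V where z = Pi0 u - C (Pi0 u)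
  set z := Pi0 u - C (Pi0 u) with hz
  have huPi : u - Pi0 u ∈ V := by
    rw [hker]; simp [map_sub, hproj]
  have huz : u - z ∈ V := by
    have : u - z = (u - Pi0 u) + C (Pi0 u) := by rw [hz]; abel
    rw [this]; exact V.add_mem huPi (hCmem _)
  -- z - uW ⊥ W and z - uW ∈ W
  have key : z - uW = 0 := by
    have hform : z - uW = (Pi0 u - w) - C (Pi0 u - w) := by
      rw [hz, hw, map_sub]; abel
    have h1 : ⟪z - uW, (Pi0 u - w) - C (Pi0 u - w)⟫ = 0 := by
      have e : z - uW = (u - uW) - (u - z) := by abel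
      rw [e, inner_sub_left, horth]
      have := hCorth (Pi0 u - w) (u - z) huz
      rw [real_inner_comm] at this
      rw [this, sub_self]
    rw [← hform] at h1
    exact inner_self_eq_zero (𝕜 := ℝ) (x := z - uW) |>.mp h1
  have h1 : uW = z := (sub_eq_zero.mp key).symm
  refine ⟨h1, ?_⟩
  rw [h1, hz]
  have : u - (Pi0 u - C (Pi0 u)) = (u - Pi0 u) + C (Pi0 u) := by abel
  rw [this]
  have : C u = C (u - Pi0 u) + C (Pi0 u) := by rw [← map_add]; congr 1; abel
  rw [this, hCid _ huPi]
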